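/- arXiv:2204.12082 — 2 statements merged into one kernel-verified Lean document; each statement's English description precedes it below -/
import Mathlib

section
/- Let r ≥ 3 and assume |j| > 2·h^{2/r}. Let (x_1,y_1), (x_2,y_2), (x_3,y_3) be primitive solutions of 0 < |F(x,y)| ≤ h, pairwise distinct up to sign, all related to the same r-th root of unity ω, with ζ_1 ≥ ζ_2 ≥ ζ_3. Assume that either (a) γ = conj(α) and δ = conj(β) (the case D < 0), or (b) u_i, v_i are nonzero and μ_i is real for i = 1,2,3 (the case D > 0). Then Z_2 ≥ |j|/(2·h^{1/r}), Z_3 ≥ (|j|/(2h))·Z_2^{r−1}, and consequently Z_3 ≥ |j|^r/(2^r·h^{2−1/r}). -/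
set_option maxHeartbeats 2000000


open Complex

noncomputable section

/-- The linear form `αx + βy` evaluated at an integer pair. -/
def lin (α β : ℂ) (x y : ℤ) : ℂ := α * (x : ℂ) + β * (y : ℂ)

/-- The diagonalizable binary form `F(x,y) = (αx+βy)^r − (γx+δy)^r`. -/
def form (α β γ δ : ℂ) (r : ℕ) (x y : ℤ) : ℂ := lin α β x y ^ r - lin γ δ x y ^ r

/-- `Z(x,y) = max(|u|,|v|)`. -/
def Zmax (α β γ δ : ℂ) (x y : ℤ) : ℝ :=
  max (‖lin α β x y‖) (‖lin γ δ x y‖)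

/-- `ζ(x,y) = |F(x,y)| / Z(x,y)^r`. -/
def zetaF (α β γ δ : ℂ) (r : ℕ) (x y : ℤ) : ℝ :=
  ‖form α β γ δ r x y‖ / Zmax α β γ δ x y ^ r

/-- `μ(x,y) = v^r / u^r`. -/
def muF (α β γ δ : ℂ) (r : ℕ) (x y : ℤ) : ℂ :=
  lin γ δ x y ^ r / lin α β x y ^ r

/-- `F` has integer coefficients: each coefficient
`binom(r,k)·(α^k β^{r−k} − γ^k δ^{r−k})` is a rational integer. -/
def IntCoeffs (α β γ δ : ℂ) (r : ℕ) : Prop :=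
  ∀ k ≤ r, ∃ n : ℤ, (r.choose k : ℂ) * (α ^ k * β ^ (r - k) - γ ^ k * δ ^ (r - k)) = (n : ℂ)

/-- `(x,y)` is a primitive solution of the Thue inequality `0 < |F(x,y)| ≤ h`. -/
def IsPrimSol (α β γ δ : ℂ) (r h : ℕ) (x y : ℤ) : Prop :=
  Int.gcd x y = 1 ∧ 0 < ‖form α β γ δ r x y‖ ∧
    ‖form α β γ δ r x y‖ ≤ (h : ℝ)

/-- The solution `(x,y)` is related to the `r`-th root of unity `ω`: the principal
argument of `(u/v)·ω⁻¹` lies in `(−π/r, π/r]`. -/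
def RelatedTo (α β γ δ : ℂ) (r : ℕ) (ω : ℂ) (x y : ℤ) : Prop :=
  (lin α β x y / lin γ δ x y * ω⁻¹).arg ∈ Set.Ioc (-(Real.pi / r)) (Real.pi / r)


lemma abs_sq_aux (ρ θ : ℝ) :
    ‖(ρ:ℂ) * Complex.exp (θ * I) - 1‖ ^ 2 = ρ^2 - 2*ρ*Real.cos θ + 1 := by
  rw [Complex.sq_norm]
  simp [Complex.normSq_apply, Complex.exp_mul_I, ← Complex.ofReal_cos, ← Complex.ofReal_sin]
  nlinarith [Real.sin_sq_add_cos_sq θ]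

lemma im_aux (a x : ℝ) : ((a:ℂ) * Complex.exp (x * I)).im = a * Real.sin x := by
  rw [Complex.exp_mul_I]
  simp [← Complex.ofReal_cos, ← Complex.ofReal_sin, Complex.mul_im]

lemma pow_exp_aux (ρ θ : ℝ) (r : ℕ) :
    ((ρ:ℂ) * Complex.exp (θ * I)) ^ r = ((ρ^r : ℝ):ℂ) * Complex.exp ((((r:ℝ)*θ : ℝ) : ℂ) * I) := by
  rw [mul_pow, ← Complex.exp_nat_mul]
  push_cast
  ring_nf

lemma key_core (r : ℕ) (hr : 3 ≤ r) (ρ θ : ℝ) (hρ : 0 ≤ ρ)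
    (hθ1 : -(Real.pi/r) < θ) (hθ2 : θ ≤ Real.pi/r)
    (hcase : ρ = 1 ∨ (0 < ρ ∧ Real.sin (r*θ) = 0)) :
    ‖(ρ:ℂ) * Complex.exp (θ * I) - 1‖ ≤ max ρ 1 ∧
    ‖(ρ:ℂ) * Complex.exp (θ * I) - 1‖ * max ρ 1 ^ (r-1) ≤
      ‖((ρ:ℂ) * Complex.exp (θ * I)) ^ r - 1‖ := by
  have hrR : (3:ℝ) ≤ r := by exact_mod_cast hr
  have hr0 : (0:ℝ) < r := by linarith
  have hrpi : (r:ℝ) * (Real.pi / r) = Real.pi := by field_simp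
  have hθabs : |θ| ≤ Real.pi / r := by rw [abs_le]; constructor <;> linarith
  have hπr3 : Real.pi / r ≤ Real.pi / 3 :=
    div_le_div_of_nonneg_left Real.pi_pos.le (by norm_num) hrR
  have hcosθ : (1:ℝ)/2 ≤ Real.cos θ := by
    rw [← Real.cos_abs]
    have := Real.cos_le_cos_of_nonneg_of_le_pi (abs_nonneg θ)
      (by linarith [Real.pi_pos] : Real.pi/3 ≤ Real.pi) (le_trans hθabs hπr3)
    rw [Real.cos_pi_div_three] at this
    linarith
  have h1sq := abs_sq_aux ρ θ
  have hrsq : ‖((ρ:ℂ) * Complex.exp (θ * I))^r - 1‖ ^ 2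
      = (ρ^r)^2 - 2*ρ^r*Real.cos ((r:ℝ)*θ) + 1 := by
    rw [pow_exp_aux]; exact abs_sq_aux (ρ^r) ((r:ℝ)*θ)
  rcases hcase with h1 | ⟨hρpos, hsin⟩
  · -- |w| = 1
    subst h1
    have hmax : max (1:ℝ) 1 = 1 := by simp
    have hcosr : Real.cos ((r:ℝ)*θ) ≤ Real.cos θ := by
      rw [← Real.cos_abs θ, ← Real.cos_abs ((r:ℝ)*θ), abs_mul, abs_of_pos hr0]
      apply Real.cos_le_cos_of_nonneg_of_le_pi (abs_nonneg θ)
      · calc (r:ℝ) * |θ| ≤ r * (Real.pi / r) :=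
              mul_le_mul_of_nonneg_left hθabs hr0.le
          _ = Real.pi := hrpi
      · nlinarith [abs_nonneg θ]
    constructor
    · rw [hmax]
      have h : ‖(1:ℝ) * Complex.exp (θ * I) - 1‖^2 ≤ 1^2 := by
        rw [h1sq]; norm_num; nlinarith
      exact (pow_le_pow_iff_left₀ (norm_nonneg _) one_pos.le two_ne_zero).mp h
    · rw [hmax, one_pow, mul_one]
      have h : ‖(1:ℝ) * Complex.exp (θ * I) - 1‖^2
          ≤ ‖((1:ℝ) * Complex.exp (θ * I))^r - 1‖^2 := by
        rw [h1sq, hrsq]; norm_num; nlinarith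
      exact (pow_le_pow_iff_left₀ (norm_nonneg _) (norm_nonneg _) two_ne_zero).mp h
  · -- w^r real
    obtain ⟨n, hn⟩ := Real.sin_eq_zero_iff.mp hsin
    have hlow : -Real.pi < (r:ℝ)*θ := by
      have := mul_lt_mul_of_pos_left hθ1 hr0
      rw [mul_neg, hrpi] at this
      linarith
    have hhigh : (r:ℝ)*θ ≤ Real.pi := by
      have := mul_le_mul_of_nonneg_left hθ2 hr0.le
      rwa [hrpi] at this
    have hn01 : n = 0 ∨ n = 1 := by
      have h1 : (-1:ℝ) < n := by
        nlinarith [Real.pi_pos]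
      have h2 : (n:ℝ) ≤ 1 := by
        nlinarith [Real.pi_pos]
      have h1' : (-1:ℤ) < n := by exact_mod_cast h1
      have h2' : n ≤ (1:ℤ) := by exact_mod_cast h2
      omega
    have hmaxpow : max ρ 1 ^ r ≤ ρ^r + 1 := by
      rcases le_total ρ 1 with hle | hle
      · rw [max_eq_right hle, one_pow]; nlinarith [pow_nonneg hρ r]
      · rw [max_eq_left hle]; nlinarith [pow_pos hρpos r]
    rcases hn01 with h | h
    · -- θ = 0
      have hθ0 : θ = 0 := by
        have h' : (r:ℝ) * θ = 0 := by rw [← hn, h]; simp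
        rcases mul_eq_zero.mp h' with h'' | h''
        · exact absurd h'' (ne_of_gt hr0)
        · exact h''
      subst hθ0
      have hexp : Complex.exp ((0:ℝ) * I) = 1 := by simp
      have habs1 : ‖(ρ:ℂ) * Complex.exp ((0:ℝ) * I) - 1‖ = |ρ - 1| := by
        rw [hexp, mul_one,
          show (ρ:ℂ) - 1 = ((ρ - 1 : ℝ):ℂ) by push_cast; ring, Complex.norm_real, Real.norm_eq_abs]
      have habsr : ‖((ρ:ℂ) * Complex.exp ((0:ℝ) * I))^r - 1‖ = |ρ^r - 1| := by
        rw [hexp, mul_one,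
          show (ρ:ℂ)^r - 1 = ((ρ^r - 1 : ℝ):ℂ) by push_cast; ring, Complex.norm_real, Real.norm_eq_abs]
      rw [habs1, habsr]
      rcases le_total ρ 1 with hle | hle
      · have hmax : max ρ 1 = 1 := max_eq_right hle
        have hρr : ρ^r ≤ ρ := pow_le_of_le_one hρ hle (by omega)
        rw [hmax, one_pow, mul_one]
        rw [_root_.abs_of_nonpos (by linarith : ρ - 1 ≤ 0),
          _root_.abs_of_nonpos (by linarith : ρ^r - 1 ≤ 0)]
        constructor <;> linarith
      · have hmax : max ρ 1 = ρ := max_eq_left hle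
        have h1ρr1 : (1:ℝ) ≤ ρ^(r-1) := one_le_pow₀ hle
        have hpow : ρ^(r-1) * ρ = ρ^r := by
          rw [← pow_succ]; congr 1; omega
        have h1ρr : (1:ℝ) ≤ ρ^r := one_le_pow₀ hle
        rw [hmax, _root_.abs_of_nonneg (by linarith : (0:ℝ) ≤ ρ - 1),
          _root_.abs_of_nonneg (by linarith : (0:ℝ) ≤ ρ^r - 1)]
        constructor
        · linarith
        · have he : (ρ-1)*ρ^(r-1) = ρ^r - ρ^(r-1) := by rw [← hpow]; ring
          rw [he]; linarith
    · -- rθ = π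
      have hrθ : (r:ℝ) * θ = Real.pi := by rw [← hn, h]; simp
      have hG1sq : ‖(ρ:ℂ) * Complex.exp (θ * I) - 1‖^2 ≤ (max ρ 1)^2 := by
        rw [h1sq]
        rcases le_total ρ 1 with hle | hle
        · rw [max_eq_right hle]; nlinarith
        · rw [max_eq_left hle]; nlinarith
      have hG1 : ‖(ρ:ℂ) * Complex.exp (θ * I) - 1‖ ≤ max ρ 1 :=
        (pow_le_pow_iff_left₀ (norm_nonneg _) (le_trans zero_le_one (le_max_right ρ 1))
          two_ne_zero).mp hG1sq
      have hwrval : (((ρ:ℂ) * Complex.exp (θ * I)))^r = -((ρ^r : ℝ):ℂ) := by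
        rw [pow_exp_aux, hrθ, Complex.exp_pi_mul_I]
        ring
      have habsr : ‖(((ρ:ℂ) * Complex.exp (θ * I)))^r - 1‖ = ρ^r + 1 := by
        rw [hwrval,
          show -((ρ^r:ℝ):ℂ) - 1 = ((-(ρ^r) - 1 : ℝ):ℂ) by push_cast; ring,
          Complex.norm_real, Real.norm_eq_abs,
          _root_.abs_of_nonpos (by nlinarith [pow_pos hρpos r] : -(ρ^r) - 1 ≤ 0)]
        ring
      refine ⟨hG1, ?_⟩
      rw [habsr]
      have hmaxmul : max ρ 1 * max ρ 1 ^ (r-1) = max ρ 1 ^ r := by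
        rw [← pow_succ']; congr 1; omega
      calc ‖(ρ:ℂ) * Complex.exp (θ * I) - 1‖ * max ρ 1 ^ (r-1)
          ≤ max ρ 1 * max ρ 1^(r-1) := mul_le_mul_of_nonneg_right hG1 (by positivity)
        _ = max ρ 1 ^ r := hmaxmul
        _ ≤ ρ^r + 1 := hmaxpow


lemma key_ineq (r : ℕ) (hr : 3 ≤ r) (w : ℂ)
    (harg1 : -(Real.pi/r) < w.arg) (harg2 : w.arg ≤ Real.pi/r)
    (hcase : ‖w‖ = 1 ∨ (w ≠ 0 ∧ (w^r).im = 0)) :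
    ‖w - 1‖ ≤ max (‖w‖) 1 ∧
    ‖w - 1‖ * max (‖w‖) 1 ^ (r-1) ≤ ‖w^r - 1‖ := by
  have hw : ((‖w‖ : ℝ):ℂ) * Complex.exp ((w.arg : ℝ) * I) = w :=
    Complex.norm_mul_exp_arg_mul_I w
  have hcase' : ‖w‖ = 1 ∨
      (0 < ‖w‖ ∧ Real.sin ((r:ℝ) * w.arg) = 0) := by
    rcases hcase with h | ⟨h0, him⟩
    · exact Or.inl h
    · right
      refine ⟨norm_pos_iff.mpr h0, ?_⟩
      have hpow : w ^ r = ((‖w‖ ^ r : ℝ):ℂ)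
          * Complex.exp ((((r:ℝ) * w.arg : ℝ) : ℂ) * I) := by
        conv_lhs => rw [← hw]
        exact pow_exp_aux _ _ r
      have him2 : (w ^ r).im = ‖w‖ ^ r * Real.sin ((r:ℝ) * w.arg) := by
        rw [hpow]; exact im_aux _ _
      rw [him2] at him
      rcases mul_eq_zero.mp him with h | h
      · exact absurd h (ne_of_gt (pow_pos (norm_pos_iff.mpr h0) r))
      · exact h
  have hres := key_core r hr (‖w‖) w.arg (norm_nonneg w) harg1 harg2 hcase'
  rw [hw] at hres
  exact hres



lemma det_cases (a b c d : ℤ) (h1 : Int.gcd a b = 1) (h2 : Int.gcd c d = 1)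
    (h3 : a * d - b * c = 0) : (a = c ∧ b = d) ∨ (a = -c ∧ b = -d) := by
  have hco1 : IsCoprime a b := Int.isCoprime_iff_gcd_eq_one.mpr h1
  have hco2 : IsCoprime c d := Int.isCoprime_iff_gcd_eq_one.mpr h2
  have hadbc : a * d = b * c := by linarith
  have hac : a ∣ c := hco1.dvd_of_dvd_mul_left (hadbc ▸ dvd_mul_right a d)
  have hca : c ∣ a := hco2.dvd_of_dvd_mul_left
    (show c ∣ d * a by rw [mul_comm d a, hadbc]; exact dvd_mul_left c b)
  have hbd : b ∣ d := hco1.symm.dvd_of_dvd_mul_left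
    (show b ∣ a * d by rw [hadbc]; exact dvd_mul_right b c)
  have hdb : d ∣ b := hco2.symm.dvd_of_dvd_mul_left
    (show d ∣ c * b by rw [mul_comm c b, ← hadbc]; exact dvd_mul_left d a)
  have hAC : a = c ∨ a = -c := Int.associated_iff.mp (associated_of_dvd_dvd hac hca)
  have hBD : b = d ∨ b = -d := Int.associated_iff.mp (associated_of_dvd_dvd hbd hdb)
  rcases hAC with hA | hA <;> rcases hBD with hB | hB
  · exact Or.inl ⟨hA, hB⟩
  · -- a = c, b = -d
    subst hA; subst hB
    have h4 : 2 * (a * d) = 0 := by linarith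
    have h5 : a = 0 ∨ d = 0 := by
      rcases mul_eq_zero.mp h4 with h | h
      · omega
      · exact mul_eq_zero.mp h
    rcases h5 with h | h
    · right; constructor <;> omega
    · left; constructor <;> omega
  · -- a = -c, b = d
    subst hA; subst hB
    have h4 : 2 * (c * b) = 0 := by linarith
    have h5 : c = 0 ∨ b = 0 := by
      rcases mul_eq_zero.mp h4 with h | h
      · omega
      · exact mul_eq_zero.mp h
    rcases h5 with h | h
    · left; constructor <;> omega
    · right; constructor <;> omega
  · exact Or.inr ⟨hA, hB⟩

lemma sol_bounds (r : ℕ) (hr : 3 ≤ r) (α β γ δ ω : ℂ) (hω : ω ^ r = 1)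
    (x y : ℤ) (hF : 0 < ‖form α β γ δ r x y‖)
    (hrel : RelatedTo α β γ δ r ω x y)
    (hcase : (γ = (starRingEnd ℂ) α ∧ δ = (starRingEnd ℂ) β) ∨
      (lin α β x y ≠ 0 ∧ lin γ δ x y ≠ 0 ∧ (muF α β γ δ r x y).im = 0)) :
    0 < Zmax α β γ δ x y ∧
    ‖lin α β x y - ω * lin γ δ x y‖ ≤ Zmax α β γ δ x y ∧
    ‖lin α β x y - ω * lin γ δ x y‖ * Zmax α β γ δ x y ^ (r-1)
      ≤ ‖form α β γ δ r x y‖ := by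
  set u := lin α β x y with hu
  set v := lin γ δ x y with hv
  have hr0 : r ≠ 0 := by omega
  have hω1 : ‖ω‖ = 1 := by
    have h1 : ‖ω‖ ^ r = 1 := by rw [← norm_pow, hω, norm_one]
    have := (pow_left_inj₀ (norm_nonneg ω) zero_le_one hr0)
    rw [one_pow] at this
    exact this.mp h1
  have hω0 : ω ≠ 0 := by
    intro h; rw [h] at hω1; simp at hω1
  have hv0 : v ≠ 0 := by
    rcases hcase with ⟨hγ, hδ⟩ | ⟨_, hv0, _⟩
    · intro hv0
      have hvconj : v = (starRingEnd ℂ) u := by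
        rw [hv, hu, lin, lin, hγ, hδ]; simp
      have hcu : (starRingEnd ℂ) u = 0 := by rw [← hvconj]; exact hv0
      have hu0 : u = 0 := by simpa using congrArg (starRingEnd ℂ) hcu
      have : form α β γ δ r x y = 0 := by
        rw [form, ← hu, ← hv, hu0, hv0, zero_pow hr0, sub_zero]
      rw [this] at hF; simp at hF
    · exact hv0
  set w := u / v * ω⁻¹ with hw
  have hwabs : ‖w‖ = ‖u‖ / ‖v‖ := by
    rw [hw, norm_mul, norm_div, norm_inv, hω1, inv_one, mul_one]
  have hvpos : 0 < ‖v‖ := norm_pos_iff.mpr hv0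
  have huv : u - ω * v = ω * (w - 1) * v := by
    rw [hw]
    field_simp
  have habs_uv : ‖u - ω * v‖ = ‖w - 1‖ * ‖v‖ := by
    rw [huv, norm_mul, norm_mul, hω1, one_mul]
  have hZ : Zmax α β γ δ x y = ‖v‖ * max (‖w‖) 1 := by
    rw [Zmax, ← hu, ← hv, hwabs]
    rcases le_total (‖u‖) (‖v‖) with hle | hle
    · rw [max_eq_right hle, max_eq_right (by rw [div_le_one hvpos]; exact hle), mul_one]
    · rw [max_eq_left hle, max_eq_left (by rw [le_div_iff₀ hvpos, one_mul]; exact hle)]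
      field_simp
  have hwr : w ^ r = u ^ r / v ^ r := by
    rw [hw, mul_pow, div_pow, inv_pow, hω, inv_one, mul_one]
  have habs_f : ‖form α β γ δ r x y‖
      = ‖w ^ r - 1‖ * ‖v‖ ^ r := by
    have : form α β γ δ r x y = (w ^ r - 1) * v ^ r := by
      rw [form, ← hu, ← hv, hwr]
      field_simp
    rw [this, norm_mul, norm_pow]
  have hZpos : 0 < Zmax α β γ δ x y := by
    rw [hZ]; positivity
  -- the case dichotomy for key_ineq
  have hkcase : ‖w‖ = 1 ∨ (w ≠ 0 ∧ (w^r).im = 0) := by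
    rcases hcase with ⟨hγ, hδ⟩ | ⟨hu0, hv0', hμ⟩
    · left
      have hvconj : v = (starRingEnd ℂ) u := by
        rw [hv, hu, lin, lin, hγ, hδ]; simp
      rw [hwabs, hvconj, Complex.norm_conj, div_self]
      intro h
      have hu0 : u = 0 := norm_eq_zero.mp h
      rw [hvconj, hu0, map_zero] at hv0
      exact hv0 rfl
    · right
      constructor
      · rw [hw]
        exact mul_ne_zero (div_ne_zero hu0 hv0) (inv_ne_zero hω0)
      · rw [hwr]
        have : u ^ r / v ^ r = (muF α β γ δ r x y)⁻¹ := by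
          rw [muF, ← hu, ← hv, inv_div]
        rw [this, Complex.inv_im, hμ]
        simp
  obtain ⟨hK1, hK2⟩ := key_ineq r hr w hrel.1 hrel.2 hkcase
  refine ⟨hZpos, ?_, ?_⟩
  · rw [habs_uv, hZ]
    calc ‖w-1‖ * ‖v‖ ≤ max (‖w‖) 1 * ‖v‖ :=
          mul_le_mul_of_nonneg_right hK1 hvpos.le
      _ = ‖v‖ * max (‖w‖) 1 := mul_comm _ _
  · rw [habs_uv, hZ, habs_f, mul_pow]
    calc ‖w-1‖ * ‖v‖ * (‖v‖ ^ (r-1) * max (‖w‖) 1 ^ (r-1))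
        = (‖w-1‖ * max (‖w‖) 1 ^ (r-1)) * (‖v‖ * ‖v‖ ^ (r-1)) := by ring
      _ ≤ ‖w^r - 1‖ * (‖v‖ * ‖v‖ ^ (r-1)) := by
          apply mul_le_mul_of_nonneg_right hK2; positivity
      _ = ‖w^r - 1‖ * ‖v‖ ^ r := by
          congr 1
          rw [← pow_succ']; congr 1; omega


lemma pair_bound (α β γ δ j ω : ℂ) (hj : j = α * δ - β * γ)
    (x1 y1 x2 y2 : ℤ) (hg1 : Int.gcd x1 y1 = 1) (hg2 : Int.gcd x2 y2 = 1)
    (hne : ¬(x1 = x2 ∧ y1 = y2)) (hne' : ¬(x1 = -x2 ∧ y1 = -y2)) :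
    ‖j‖ ≤
      ‖lin α β x1 y1 - ω * lin γ δ x1 y1‖ * ‖lin γ δ x2 y2‖
      + ‖lin α β x2 y2 - ω * lin γ δ x2 y2‖ * ‖lin γ δ x1 y1‖ := by
  have hdet : x1 * y2 - y1 * x2 ≠ 0 := by
    intro h
    rcases det_cases x1 y1 x2 y2 hg1 hg2 h with ⟨h1, h2⟩ | ⟨h1, h2⟩
    · exact hne ⟨h1, h2⟩
    · exact hne' ⟨h1, h2⟩
  have hdet1 : (1:ℝ) ≤ |((x1 * y2 - y1 * x2 : ℤ) : ℝ)| := by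
    have := Int.one_le_abs hdet
    exact_mod_cast this
  have hident : lin α β x1 y1 * lin γ δ x2 y2 - lin α β x2 y2 * lin γ δ x1 y1
      = j * ((x1 * y2 - y1 * x2 : ℤ) : ℂ) := by
    rw [hj]; unfold lin; push_cast; ring
  have habs : ‖j‖ * |((x1 * y2 - y1 * x2 : ℤ) : ℝ)|
      = ‖lin α β x1 y1 * lin γ δ x2 y2 - lin α β x2 y2 * lin γ δ x1 y1‖ := by
    rw [hident, norm_mul, Complex.norm_intCast]
  have hsplit : lin α β x1 y1 * lin γ δ x2 y2 - lin α β x2 y2 * lin γ δ x1 y1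
      = (lin α β x1 y1 - ω * lin γ δ x1 y1) * lin γ δ x2 y2
        - (lin α β x2 y2 - ω * lin γ δ x2 y2) * lin γ δ x1 y1 := by ring
  calc ‖j‖ = ‖j‖ * 1 := (mul_one _).symm
    _ ≤ ‖j‖ * |((x1 * y2 - y1 * x2 : ℤ) : ℝ)| := by
        have := norm_nonneg j
        gcongr
    _ = ‖lin α β x1 y1 * lin γ δ x2 y2 - lin α β x2 y2 * lin γ δ x1 y1‖ := habs
    _ ≤ _ := by
        rw [hsplit]
        calc ‖(lin α β x1 y1 - ω * lin γ δ x1 y1) * lin γ δ x2 y2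
              - (lin α β x2 y2 - ω * lin γ δ x2 y2) * lin γ δ x1 y1‖
            ≤ ‖(lin α β x1 y1 - ω * lin γ δ x1 y1) * lin γ δ x2 y2‖
              + ‖(lin α β x2 y2 - ω * lin γ δ x2 y2) * lin γ δ x1 y1‖ := by
              exact norm_sub_le _ _
          _ = _ := by rw [norm_mul, norm_mul]


/-- Let `r ≥ 3`, `|j| > 2·h^{2/r}`, and let
`(x_1,y_1), (x_2,y_2), (x_3,y_3)` be primitive solutions of `0 < |F| ≤ h`, pairwise
distinct up to sign, all related to the same `r`-th root of unity `ω`, with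
`ζ_1 ≥ ζ_2 ≥ ζ_3`. Assume either (a) `γ = conj α`, `δ = conj β` (`D < 0`) or (b)
`u_i, v_i ≠ 0` and `μ_i` real for `i = 1,2,3` (`D > 0`). Then `Z_2 ≥ |j|/(2·h^{1/r})`,
`Z_3 ≥ (|j|/(2h))·Z_2^{r−1}`, and consequently `Z_3 ≥ |j|^r/(2^r·h^{2−1/r})`. -/
theorem three_solutions_Z_bounds (r h : ℕ) (hr : 3 ≤ r) (hh : 1 ≤ h)
    (α β γ δ j : ℂ) (hj : j = α * δ - β * γ) (hj0 : j ≠ 0) (hint : IntCoeffs α β γ δ r)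
    (hjbig : 2 * (h : ℝ) ^ ((2 : ℝ) / r) < ‖j‖)
    (ω : ℂ) (hω : ω ^ r = 1)
    (s1 s2 s3 : ℤ × ℤ)
    (hs1 : IsPrimSol α β γ δ r h s1.1 s1.2) (hs2 : IsPrimSol α β γ δ r h s2.1 s2.2)
    (hs3 : IsPrimSol α β γ δ r h s3.1 s3.2)
    (hrel1 : RelatedTo α β γ δ r ω s1.1 s1.2) (hrel2 : RelatedTo α β γ δ r ω s2.1 s2.2)
    (hrel3 : RelatedTo α β γ δ r ω s3.1 s3.2)
    (hd12 : s1 ≠ s2 ∧ s1 ≠ (-s2.1, -s2.2)) (hd13 : s1 ≠ s3 ∧ s1 ≠ (-s3.1, -s3.2))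
    (hd23 : s2 ≠ s3 ∧ s2 ≠ (-s3.1, -s3.2))
    (hζ12 : zetaF α β γ δ r s2.1 s2.2 ≤ zetaF α β γ δ r s1.1 s1.2)
    (hζ23 : zetaF α β γ δ r s3.1 s3.2 ≤ zetaF α β γ δ r s2.1 s2.2)
    (hcase : (γ = (starRingEnd ℂ) α ∧ δ = (starRingEnd ℂ) β) ∨
      (∀ s ∈ ({s1, s2, s3} : Set (ℤ × ℤ)), lin α β s.1 s.2 ≠ 0 ∧ lin γ δ s.1 s.2 ≠ 0 ∧
        (muF α β γ δ r s.1 s.2).im = 0)) :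
    ‖j‖ / (2 * (h : ℝ) ^ (1 / (r : ℝ))) ≤ Zmax α β γ δ s2.1 s2.2 ∧
    ‖j‖ / (2 * (h : ℝ)) * Zmax α β γ δ s2.1 s2.2 ^ (r - 1)
      ≤ Zmax α β γ δ s3.1 s3.2 ∧
    ‖j‖ ^ r / ((2 : ℝ) ^ r * (h : ℝ) ^ (2 - 1 / (r : ℝ)))
      ≤ Zmax α β γ δ s3.1 s3.2 := by
  have hr0 : r ≠ 0 := by omega
  have hrR0 : (r:ℝ) ≠ 0 := by positivity
  have hhpos : (0:ℝ) < h := by exact_mod_cast hh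
  obtain ⟨hg1, hF1pos, hF1le⟩ := hs1
  obtain ⟨hg2, hF2pos, hF2le⟩ := hs2
  obtain ⟨hg3, hF3pos, hF3le⟩ := hs3
  have hc1 : (γ = (starRingEnd ℂ) α ∧ δ = (starRingEnd ℂ) β) ∨
      (lin α β s1.1 s1.2 ≠ 0 ∧ lin γ δ s1.1 s1.2 ≠ 0 ∧ (muF α β γ δ r s1.1 s1.2).im = 0) := by
    rcases hcase with h | h
    · exact Or.inl h
    · exact Or.inr (h s1 (by simp))
  have hc2 : (γ = (starRingEnd ℂ) α ∧ δ = (starRingEnd ℂ) β) ∨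
      (lin α β s2.1 s2.2 ≠ 0 ∧ lin γ δ s2.1 s2.2 ≠ 0 ∧ (muF α β γ δ r s2.1 s2.2).im = 0) := by
    rcases hcase with h | h
    · exact Or.inl h
    · exact Or.inr (h s2 (by simp))
  have hc3 : (γ = (starRingEnd ℂ) α ∧ δ = (starRingEnd ℂ) β) ∨
      (lin α β s3.1 s3.2 ≠ 0 ∧ lin γ δ s3.1 s3.2 ≠ 0 ∧ (muF α β γ δ r s3.1 s3.2).im = 0) := by
    rcases hcase with h | h
    · exact Or.inl h
    · exact Or.inr (h s3 (by simp))
  obtain ⟨hZ1pos, hM11, hM21⟩ := sol_bounds r hr α β γ δ ω hω s1.1 s1.2 hF1pos hrel1 hc1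
  obtain ⟨hZ2pos, hM12, hM22⟩ := sol_bounds r hr α β γ δ ω hω s2.1 s2.2 hF2pos hrel2 hc2
  obtain ⟨hZ3pos, hM13, hM23⟩ := sol_bounds r hr α β γ δ ω hω s3.1 s3.2 hF3pos hrel3 hc3
  set A1 := ‖lin α β s1.1 s1.2 - ω * lin γ δ s1.1 s1.2‖ with hA1
  set A2 := ‖lin α β s2.1 s2.2 - ω * lin γ δ s2.1 s2.2‖ with hA2
  set A3 := ‖lin α β s3.1 s3.2 - ω * lin γ δ s3.1 s3.2‖ with hA3
  set Z1 := Zmax α β γ δ s1.1 s1.2 with hZ1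
  set Z2 := Zmax α β γ δ s2.1 s2.2 with hZ2
  set Z3 := Zmax α β γ δ s3.1 s3.2 with hZ3
  set F1 := ‖form α β γ δ r s1.1 s1.2‖ with hF1
  set F2 := ‖form α β γ δ r s2.1 s2.2‖ with hF2
  set F3 := ‖form α β γ δ r s3.1 s3.2‖ with hF3
  have hA1n : 0 ≤ A1 := norm_nonneg _
  have hA2n : 0 ≤ A2 := norm_nonneg _
  have hA3n : 0 ≤ A3 := norm_nonneg _
  have hζ12' : F2 / Z2 ^ r ≤ F1 / Z1 ^ r := hζ12
  have hζ23' : F3 / Z3 ^ r ≤ F2 / Z2 ^ r := hζ23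
  have pair12 : ‖j‖ ≤ A1 * Z2 + A2 * Z1 := by
    have h0 := pair_bound α β γ δ j ω hj s1.1 s1.2 s2.1 s2.2 hg1 hg2
      (fun ⟨h1, h2⟩ => hd12.1 (Prod.ext h1 h2))
      (fun ⟨h1, h2⟩ => hd12.2 (Prod.ext h1 h2))
    calc ‖j‖ ≤ A1 * ‖lin γ δ s2.1 s2.2‖
          + A2 * ‖lin γ δ s1.1 s1.2‖ := h0
      _ ≤ A1 * Z2 + A2 * Z1 := by
          gcongr <;> exact le_max_right _ _
  have pair23 : ‖j‖ ≤ A2 * Z3 + A3 * Z2 := by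
    have h0 := pair_bound α β γ δ j ω hj s2.1 s2.2 s3.1 s3.2 hg2 hg3
      (fun ⟨h1, h2⟩ => hd23.1 (Prod.ext h1 h2))
      (fun ⟨h1, h2⟩ => hd23.2 (Prod.ext h1 h2))
    calc ‖j‖ ≤ A2 * ‖lin γ δ s3.1 s3.2‖
          + A3 * ‖lin γ δ s2.1 s2.2‖ := h0
      _ ≤ A2 * Z3 + A3 * Z2 := by
          gcongr <;> exact le_max_right _ _
  have hApow : ∀ A Z F : ℝ, 0 ≤ A → 0 < Z → A ≤ Z → A * Z ^ (r-1) ≤ F → A ^ r ≤ F := by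
    intro A Z F hA hZ h1 h2
    calc A ^ r = A * A ^ (r-1) := by rw [← pow_succ']; congr 1; omega
      _ ≤ A * Z ^ (r-1) := by gcongr
      _ ≤ F := h2
  have hA1r : A1 ^ r ≤ F1 := hApow A1 Z1 F1 hA1n hZ1pos hM11 hM21
  have hA2r : A2 ^ r ≤ F2 := hApow A2 Z2 F2 hA2n hZ2pos hM12 hM22
  have hle_rpow : ∀ x y : ℝ, 0 ≤ x → x ^ r ≤ y → x ≤ y ^ (1/(r:ℝ)) := by
    intro x y hx hxy
    have := Real.rpow_le_rpow (by positivity : (0:ℝ) ≤ x ^ r) hxy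
      (by positivity : (0:ℝ) ≤ 1/(r:ℝ))
    rw [one_div]
    rwa [one_div, Real.pow_rpow_inv_natCast hx hr0] at this
  have hhr : (0:ℝ) < (h:ℝ) ^ (1/(r:ℝ)) := Real.rpow_pos_of_pos hhpos _
  have hF2r : (0:ℝ) < F2 ^ (1/(r:ℝ)) := Real.rpow_pos_of_pos hF2pos _
  have hA1h : A1 ≤ (h:ℝ) ^ (1/(r:ℝ)) := hle_rpow A1 h hA1n (le_trans hA1r hF1le)
  have hA2F : A2 ≤ F2 ^ (1/(r:ℝ)) := hle_rpow A2 F2 hA2n hA2r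
  have hZ1le : Z1 ≤ (h:ℝ) ^ (1/(r:ℝ)) * Z2 / F2 ^ (1/(r:ℝ)) := by
    have hcross : F2 * Z1 ^ r ≤ F1 * Z2 ^ r :=
      (div_le_div_iff₀ (by positivity) (by positivity)).mp hζ12'
    have hZ1r : Z1 ^ r ≤ (h:ℝ) * Z2 ^ r / F2 := by
      rw [le_div_iff₀ hF2pos]
      calc Z1 ^ r * F2 = F2 * Z1 ^ r := mul_comm _ _
        _ ≤ F1 * Z2 ^ r := hcross
        _ ≤ (h:ℝ) * Z2 ^ r := by gcongr
    have h2 := hle_rpow Z1 ((h:ℝ) * Z2 ^ r / F2) hZ1pos.le hZ1r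
    rwa [Real.div_rpow (by positivity) hF2pos.le,
      Real.mul_rpow (by positivity) (by positivity), one_div,
      Real.pow_rpow_inv_natCast hZ2pos.le hr0, ← one_div] at h2
  have goal1 : ‖j‖ / (2 * (h:ℝ) ^ (1/(r:ℝ))) ≤ Z2 := by
    rw [div_le_iff₀ (by positivity)]
    have t1 : A1 * Z2 ≤ (h:ℝ) ^ (1/(r:ℝ)) * Z2 := by gcongr
    have t2 : A2 * Z1 ≤ (h:ℝ) ^ (1/(r:ℝ)) * Z2 := by
      calc A2 * Z1 ≤ F2 ^ (1/(r:ℝ)) * ((h:ℝ) ^ (1/(r:ℝ)) * Z2 / F2 ^ (1/(r:ℝ))) := by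
            gcongr
        _ = (h:ℝ) ^ (1/(r:ℝ)) * Z2 := by field_simp
    calc ‖j‖ ≤ A1 * Z2 + A2 * Z1 := pair12
      _ ≤ (h:ℝ) ^ (1/(r:ℝ)) * Z2 + (h:ℝ) ^ (1/(r:ℝ)) * Z2 := add_le_add t1 t2
      _ = Z2 * (2 * (h:ℝ) ^ (1/(r:ℝ))) := by ring
  have goal2 : ‖j‖ / (2 * (h:ℝ)) * Z2 ^ (r-1) ≤ Z3 := by
    rw [div_mul_eq_mul_div, div_le_iff₀ (by positivity)]
    have hcross : F3 * Z2 ^ r ≤ F2 * Z3 ^ r :=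
      (div_le_div_iff₀ (by positivity) (by positivity)).mp hζ23'
    have hZ2pow : Z2 * Z2 ^ (r-1) = Z2 ^ r := by rw [← pow_succ']; congr 1; omega
    have hZ3pow : Z3 * Z3 ^ (r-1) = Z3 ^ r := by rw [← pow_succ']; congr 1; omega
    have t1 : A2 * Z3 * Z2 ^ (r-1) ≤ (h:ℝ) * Z3 := by
      calc A2 * Z3 * Z2 ^ (r-1) = A2 * Z2 ^ (r-1) * Z3 := by ring
        _ ≤ F2 * Z3 := by gcongr
        _ ≤ (h:ℝ) * Z3 := by gcongr
    have t2 : A3 * Z2 * Z2 ^ (r-1) ≤ (h:ℝ) * Z3 := by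
      have hmul : A3 * Z2 * Z2 ^ (r-1) * Z3 ^ (r-1) ≤ (h:ℝ) * Z3 * Z3 ^ (r-1) := by
        calc A3 * Z2 * Z2 ^ (r-1) * Z3 ^ (r-1)
            = (A3 * Z3 ^ (r-1)) * (Z2 * Z2 ^ (r-1)) := by ring
          _ ≤ F3 * (Z2 * Z2 ^ (r-1)) := by gcongr
          _ = F3 * Z2 ^ r := by rw [hZ2pow]
          _ ≤ F2 * Z3 ^ r := hcross
          _ ≤ (h:ℝ) * Z3 ^ r := by gcongr
          _ = (h:ℝ) * Z3 * Z3 ^ (r-1) := by rw [mul_assoc, hZ3pow]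
      exact le_of_mul_le_mul_right hmul (by positivity)
    calc ‖j‖ * Z2 ^ (r-1) ≤ (A2 * Z3 + A3 * Z2) * Z2 ^ (r-1) := by
          gcongr
      _ = A2 * Z3 * Z2 ^ (r-1) + A3 * Z2 * Z2 ^ (r-1) := by ring
      _ ≤ (h:ℝ) * Z3 + (h:ℝ) * Z3 := add_le_add t1 t2
      _ = Z3 * (2 * (h:ℝ)) := by ring
  refine ⟨goal1, goal2, ?_⟩
  have hkey : ‖j‖ / (2 * (h:ℝ))
      * (‖j‖ / (2 * (h:ℝ) ^ (1/(r:ℝ)))) ^ (r-1) ≤ Z3 := by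
    calc ‖j‖ / (2 * (h:ℝ)) * (‖j‖ / (2 * (h:ℝ) ^ (1/(r:ℝ)))) ^ (r-1)
        ≤ ‖j‖ / (2 * (h:ℝ)) * Z2 ^ (r-1) := by
          gcongr
      _ ≤ Z3 := goal2
  have hHs : (h:ℝ) * ((h:ℝ) ^ (1/(r:ℝ))) ^ (r-1) = (h:ℝ) ^ (2 - 1/(r:ℝ)) := by
    have hcast : ((r - 1 : ℕ) : ℝ) = (r:ℝ) - 1 := by
      have : 1 ≤ r := by omega
      push_cast [this]
      ring
    rw [← Real.rpow_natCast ((h:ℝ) ^ (1/(r:ℝ))) (r-1), ← Real.rpow_mul hhpos.le, hcast]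
    rw [show (2 - 1/(r:ℝ)) = 1 + 1/(r:ℝ) * ((r:ℝ) - 1) by field_simp; ring,
      Real.rpow_add hhpos, Real.rpow_one]
  have hE : ‖j‖ / (2 * (h:ℝ)) * (‖j‖ / (2 * (h:ℝ) ^ (1/(r:ℝ)))) ^ (r-1)
      = ‖j‖ ^ r / ((2:ℝ) ^ r * (h:ℝ) ^ (2 - 1/(r:ℝ))) := by
    have hJ : ‖j‖ * ‖j‖ ^ (r-1) = ‖j‖ ^ r := by
      rw [← pow_succ']; congr 1; omega
    have h2p : (2:ℝ) * 2 ^ (r-1) = 2 ^ r := by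
      rw [← pow_succ']; congr 1; omega
    rw [div_pow, mul_pow, div_mul_div_comm, hJ]
    rw [← hHs, ← h2p]
    ring_nf
  calc ‖j‖ ^ r / ((2:ℝ) ^ r * (h:ℝ) ^ (2 - 1/(r:ℝ)))
      = ‖j‖ / (2 * (h:ℝ)) * (‖j‖ / (2 * (h:ℝ) ^ (1/(r:ℝ)))) ^ (r-1) :=
        hE.symm
    _ ≤ Z3 := hkey
end
end

section
/- Let r ≥ 1 be an integer and let u, v be nonzero complex numbers such that μ := (v/u)^r is a positive real number, and let ω be the r-th root of unity related to the pair (u,v). If |u| ≤ |v|, then |u/v − ω| = 1 − |μ|^{-1/r} ≤ |u^r − v^r|/max(|u|,|v|)^r; if |u| > |v|, then |u/v − ω| = |μ|^{-1/r} − 1 ≤ (|u|/|v|)·|u^r − v^r|/max(|u|,|v|)^r. -/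
open Complex

lemma aux_root (r : ℕ) (hr : 1 ≤ r) (w : ℂ) (ρ : ℝ) (hρ : 0 < ρ)
    (hwr : w ^ r = ((ρ : ℂ)) ^ r)
    (harg : w.arg ∈ Set.Ioc (-(Real.pi / r)) (Real.pi / r)) : w = ρ := by
  have hrpos : (0 : ℝ) < r := by exact_mod_cast hr
  have habs : ‖w‖ = ρ := by
    have h1 : ‖w‖ ^ r = ρ ^ r := by
      have := congrArg (‖·‖) hwr
      simpa [norm_pow, Complex.norm_of_nonneg hρ.le, abs_of_pos hρ] using this
    exact (pow_left_inj₀ (norm_nonneg w) hρ.le (by omega)).mp h1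
  have hwdecomp : (ρ : ℂ) * Complex.exp (w.arg * I) = w := by
    rw [← habs]; exact Complex.norm_mul_exp_arg_mul_I w
  have hexp : Complex.exp ((r : ℂ) * (w.arg * I)) = 1 := by
    have h2 : ((ρ : ℂ)) ^ r * Complex.exp (w.arg * I) ^ r = (ρ : ℂ) ^ r := by
      rw [← mul_pow, hwdecomp, hwr]
    have hρc : ((ρ : ℂ)) ^ r ≠ 0 := pow_ne_zero _ (by exact_mod_cast hρ.ne')
    have := mul_left_cancel₀ hρc (h2.trans (mul_one ((ρ:ℂ)^r)).symm)
    rw [← Complex.exp_nat_mul] at this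
    exact this
  rw [Complex.exp_eq_one_iff] at hexp
  obtain ⟨n, hn⟩ := hexp
  have hre : (r : ℝ) * w.arg = n * (2 * Real.pi) := by
    have := congrArg Complex.im hn
    simpa [Complex.mul_im, Complex.mul_re] using this
  have hn0 : n = 0 := by
    have hπ : 0 < Real.pi := Real.pi_pos
    have h1 : (r : ℝ) * w.arg ≤ Real.pi := by
      calc (r : ℝ) * w.arg ≤ (r : ℝ) * (Real.pi / r) :=
        mul_le_mul_of_nonneg_left harg.2 hrpos.le
      _ = Real.pi := by field_simp
    have h2 : -(Real.pi) < (r : ℝ) * w.arg := by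
      have := harg.1
      calc -(Real.pi) = (r:ℝ) * (-(Real.pi / r)) := by field_simp
      _ < (r : ℝ) * w.arg := by exact (mul_lt_mul_iff_right₀ hrpos).mpr this
    rw [hre] at h1 h2
    by_contra h
    rcases lt_or_gt_of_ne h with h' | h'
    · have : (n : ℝ) ≤ -1 := by exact_mod_cast Int.le_of_lt_add_one (by simpa using h')
      nlinarith
    · have : (1 : ℝ) ≤ n := by exact_mod_cast h'
      nlinarith
  have harg0 : w.arg = 0 := by
    rw [hn0] at hre; simp at hre
    rcases hre with h | h
    · exact absurd h (by omega)
    · exact h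
  rw [← hwdecomp, harg0]
  simp


/-- Let `r ≥ 1` and let `u, v` be nonzero complex numbers such that
`μ := (v/u)^r` is a positive real number, and let `ω` be the `r`-th root of unity related
to `(u,v)`. If `|u| ≤ |v|`, then `|u/v − ω| = 1 − |μ|^{-1/r} ≤ |u^r − v^r|/max(|u|,|v|)^r`;
if `|u| > |v|`, then `|u/v − ω| = |μ|^{-1/r} − 1 ≤ (|u|/|v|)·|u^r − v^r|/max(|u|,|v|)^r`. -/
theorem rel_root_dist_formula (r : ℕ) (hr : 1 ≤ r) (u v : ℂ) (hu : u ≠ 0) (hv : v ≠ 0)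
    (μ : ℂ) (hμ : μ = (v / u) ^ r) (hμpos : ∃ m : ℝ, 0 < m ∧ (m : ℂ) = μ)
    (ω : ℂ) (hω : ω ^ r = 1)
    (hrel : (u / v * ω⁻¹).arg ∈ Set.Ioc (-(Real.pi / r)) (Real.pi / r)) :
    (‖u‖ ≤ ‖v‖ →
      ‖u / v - ω‖ = 1 - ‖μ‖ ^ (-(1 / (r : ℝ))) ∧
      ‖u / v - ω‖ ≤
        ‖u ^ r - v ^ r‖ / max (‖u‖) (‖v‖) ^ r) ∧
    (‖v‖ < ‖u‖ →
      ‖u / v - ω‖ = ‖μ‖ ^ (-(1 / (r : ℝ))) - 1 ∧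
      ‖u / v - ω‖ ≤ ‖u‖ / ‖v‖ *
        (‖u ^ r - v ^ r‖ / max (‖u‖) (‖v‖) ^ r)) := by
  obtain ⟨m, hm, hmμ⟩ := hμpos
  set z : ℂ := u / v with hzdef
  have hz0 : z ≠ 0 := div_ne_zero hu hv
  set ρ : ℝ := ‖z‖ with hρdef
  have hρpos : 0 < ρ := norm_pos_iff.mpr hz0
  have hbpos : 0 < ‖v‖ := norm_pos_iff.mpr hv
  have hapos : 0 < ‖u‖ := norm_pos_iff.mpr hu
  have hab : ‖u‖ = ρ * ‖v‖ := by
    rw [hρdef, hzdef, norm_div]; field_simp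
  -- z^r = μ⁻¹, a positive real
  have hμ0 : μ ≠ 0 := by rw [← hmμ]; exact_mod_cast hm.ne'
  have hzr : z ^ r = μ⁻¹ := by
    rw [hμ, hzdef, ← inv_pow, inv_div]
  have hzrρ : z ^ r = ((ρ : ℂ)) ^ r := by
    have h1 : z ^ r = ((m⁻¹ : ℝ) : ℂ) := by rw [hzr, ← hmμ]; push_cast; ring
    have h2 : ρ ^ r = m⁻¹ := by
      have := congrArg (‖·‖) h1
      rw [norm_pow, ← hρdef] at this
      rw [this, Complex.norm_real, Real.norm_eq_abs, abs_of_pos (by positivity)]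
    rw [h1, ← h2]; push_cast; ring
  -- ω has modulus 1
  have hω0 : ω ≠ 0 := by
    intro h; rw [h, zero_pow (by omega)] at hω; exact one_ne_zero hω.symm
  have hωabs : ‖ω‖ = 1 := by
    have h1 : ‖ω‖ ^ r = 1 ^ r := by
      have := congrArg (‖·‖) hω; simpa [norm_pow] using this
    exact (pow_left_inj₀ (norm_nonneg ω) zero_le_one (by omega)).mp h1
  -- apply the key lemma
  have hwr : (z * ω⁻¹) ^ r = ((ρ : ℂ)) ^ r := by
    rw [mul_pow, inv_pow, hω, inv_one, mul_one, hzrρ]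
  have hw := aux_root r hr (z * ω⁻¹) ρ hρpos hwr hrel
  have hzω : z = (ρ : ℂ) * ω := by
    field_simp at hw; exact hw.trans (mul_comm _ _)
  -- distance formula
  have hdist : ‖(z - ω)‖ = |ρ - 1| := by
    have : z - ω = ((ρ : ℂ) - 1) * ω := by rw [hzω]; ring
    rw [this, norm_mul, hωabs, mul_one]
    rw [show ((ρ : ℂ) - 1) = ((ρ - 1 : ℝ) : ℂ) by push_cast; ring, Complex.norm_real, Real.norm_eq_abs]
  -- rpow formula
  have hrne : (r : ℝ) ≠ 0 := by positivity
  have hμabs : ‖μ‖ = (ρ⁻¹) ^ r := by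
    have h1 : ‖μ‖⁻¹ = ρ ^ r := by
      rw [← norm_inv, ← hzr, norm_pow, ← hρdef]
    rw [inv_pow, ← h1, inv_inv]
  have hrpow : ‖μ‖ ^ (-(1 / (r : ℝ))) = ρ := by
    rw [hμabs, ← Real.rpow_natCast (ρ⁻¹) r, ← Real.rpow_mul (by positivity)]
    rw [show (r : ℝ) * (-(1 / (r : ℝ))) = -1 by field_simp]
    rw [Real.rpow_neg_one, inv_inv]
  -- difference of powers
  have hdiff : ‖(u ^ r - v ^ r)‖ = ‖v‖ ^ r * |ρ ^ r - 1| := by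
    have h1 : u ^ r - v ^ r = v ^ r * (z ^ r - 1) := by
      rw [hzdef, div_pow]; field_simp
    rw [h1, norm_mul, norm_pow, hzrρ]
    congr 1
    rw [show ((ρ : ℂ)) ^ r - 1 = ((ρ ^ r - 1 : ℝ) : ℂ) by push_cast; ring,
      Complex.norm_real, Real.norm_eq_abs]
  constructor
  · intro hle
    have hρ1 : ρ ≤ 1 := by
      rw [hab] at hle; nlinarith
    have habs1 : |ρ - 1| = 1 - ρ := by rw [abs_of_nonpos (by linarith)]; ring
    refine ⟨by rw [hdist, habs1, hrpow], ?_⟩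
    rw [hdist, habs1, max_eq_right hle, hdiff,
      abs_of_nonpos (by nlinarith [pow_le_one₀ hρpos.le hρ1 (n := r)])]
    rw [show ‖v‖ ^ r * -(ρ ^ r - 1) / ‖v‖ ^ r = 1 - ρ ^ r by
      field_simp; ring]
    have : ρ ^ r ≤ ρ := by
      calc ρ ^ r ≤ ρ ^ 1 := pow_le_pow_of_le_one hρpos.le hρ1 hr
      _ = ρ := pow_one ρ
    linarith
  · intro hlt
    have hρ1 : 1 < ρ := by
      rw [hab] at hlt; nlinarith
    have habs1 : |ρ - 1| = ρ - 1 := abs_of_nonneg (by linarith)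
    refine ⟨by rw [hdist, habs1, hrpow], ?_⟩
    rw [hdist, habs1, max_eq_left hlt.le, hdiff, hab,
      _root_.abs_of_nonneg (a := ρ ^ r - 1)
        (by nlinarith [one_le_pow₀ hρ1.le (M₀ := ℝ) (n := r)])]
    have hρr : ρ ≤ ρ ^ r := le_self_pow₀ hρ1.le (by omega)
    have hrhs : ρ * ‖v‖ / ‖v‖ *
        (‖v‖ ^ r * (ρ ^ r - 1) / (ρ * ‖v‖) ^ r)
        = ρ * (ρ ^ r - 1) / ρ ^ r := by
      rw [mul_pow]; field_simp
    rw [hrhs, le_div_iff₀ (by positivity)]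
    nlinarith
end
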